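/- arXiv:1305.2587 — 6 statements merged into one kernel-verified Lean document; each statement's English description precedes it below -/
import Mathlib

section
/- Let h, ψ : [0,∞) → ℝ be continuous functions, and suppose (φ, η) is a pair of continuous functions solving the Skorohod problem for ψ on the time-varying domain (−∞, h(·)], with η(0) = max(ψ(0) − h(0), 0). Then necessarily η(t) = sup_{s∈[0,t]} max(ψ(s) − h(s), 0) and φ(t) = ψ(t) − η(t) for all t ≥ 0; in particular the solution of the Skorohod problem is unique. -/
/-- Uniqueness for the Skorohod problem on the time-varying domain `(−∞, h(·)]`:
any continuous solution `(φ, η)` with `η(0) = (ψ(0) − h(0))⁺` is given by the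
explicit formula `η(t) = sup_{s∈[0,t]} (ψ(s) − h(s))⁺`, `φ = ψ − η`. -/
theorem skorohod_problem_uniqueness
    (h ψ φ η : ℝ → ℝ)
    (hh : ContinuousOn h (Set.Ici 0))
    (hψ : ContinuousOn ψ (Set.Ici 0))
    (hφc : ContinuousOn φ (Set.Ici 0))
    (hηc : ContinuousOn η (Set.Ici 0))
    -- (1) φ = ψ − η
    (h1 : ∀ t, 0 ≤ t → φ t = ψ t - η t)
    -- (2) φ ≤ h
    (h2 : ∀ t, 0 ≤ t → φ t ≤ h t)
    -- (3) η is non-negative, non-decreasing and flat off the boundary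
    (h3a : ∀ t, 0 ≤ t → 0 ≤ η t)
    (h3b : ∀ s t, 0 ≤ s → s ≤ t → η s ≤ η t)
    (h3c : ∀ s t, 0 ≤ s → s ≤ t → (∀ u ∈ Set.Icc s t, φ u < h u) → η s = η t)
    -- initial condition
    (h0 : η 0 = max (ψ 0 - h 0) 0) :
    ∀ t, 0 ≤ t →
      η t = sSup ((fun s => max (ψ s - h s) 0) '' Set.Icc 0 t) ∧
      φ t = ψ t - η t := by
  intro t ht
  have hsub : Set.Icc (0:ℝ) t ⊆ Set.Ici 0 := Set.Icc_subset_Ici_self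
  set f : ℝ → ℝ := fun s => max (ψ s - h s) 0 with hf
  have hfc : ContinuousOn f (Set.Icc 0 t) :=
    ((hψ.mono hsub).sub (hh.mono hsub)).sup continuousOn_const
  have hne : (Set.Icc (0:ℝ) t).Nonempty := ⟨0, le_refl 0, ht⟩
  have hcpt : IsCompact (f '' Set.Icc 0 t) := isCompact_Icc.image_of_continuousOn hfc
  have hbdd : BddAbove (f '' Set.Icc 0 t) := hcpt.bddAbove
  have hneS : (f '' Set.Icc 0 t).Nonempty := hne.image f
  set M := sSup (f '' Set.Icc 0 t) with hM
  have hfleM : ∀ s ∈ Set.Icc (0:ℝ) t, f s ≤ M := fun s hs =>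
    le_csSup hbdd (Set.mem_image_of_mem f hs)
  have key1 : ∀ s ∈ Set.Icc (0:ℝ) t, f s ≤ η s := by
    intro s hs
    have hs0 : (0:ℝ) ≤ s := hs.1
    have h2' := h2 s hs0
    rw [h1 s hs0] at h2'
    exact max_le (by linarith) (h3a s hs0)
  have hMle : M ≤ η t := by
    refine csSup_le hneS ?_
    rintro x ⟨s, hs, rfl⟩
    exact (key1 s hs).trans (h3b s t hs.1 hs.2)
  have hle : η t ≤ M := by
    by_contra hlt
    push_neg at hlt
    set A := Set.Icc 0 t ∩ η ⁻¹' Set.Iic M with hA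
    have h0A : (0:ℝ) ∈ A := by
      refine ⟨⟨le_refl 0, ht⟩, ?_⟩
      simp only [Set.mem_preimage, Set.mem_Iic]
      rw [h0]
      exact hfleM 0 ⟨le_refl 0, ht⟩
    have hAne : A.Nonempty := ⟨0, h0A⟩
    have hAbdd : BddAbove A := ⟨t, fun x hx => hx.1.2⟩
    have hAclosed : IsClosed A :=
      (hηc.mono hsub).preimage_isClosed_of_isClosed isClosed_Icc isClosed_Iic
    set s₀ := sSup A with hs₀
    have hs₀A : s₀ ∈ A := hAclosed.csSup_mem hAne hAbdd
    have hs₀0 : (0:ℝ) ≤ s₀ := hs₀A.1.1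
    have hs₀t : s₀ < t := by
      rcases lt_or_eq_of_le hs₀A.1.2 with hc | hc
      · exact hc
      · exfalso
        have := hs₀A.2
        rw [hc] at this
        exact absurd this (not_le.mpr hlt)
    have hlt' : ∀ u ∈ Set.Ioc s₀ t, M < η u := by
      intro u hu
      by_contra hle'
      push_neg at hle'
      have huA : u ∈ A := ⟨⟨hs₀0.trans hu.1.le, hu.2⟩, hle'⟩
      exact absurd (le_csSup hAbdd huA) (not_le.mpr hu.1)
    have hφlt : ∀ u ∈ Set.Ioc s₀ t, φ u < h u := by
      intro u hu
      have hu0 : (0:ℝ) ≤ u := hs₀0.trans hu.1.le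
      have h1' : ψ u - h u ≤ M := (le_max_left _ _).trans (hfleM u ⟨hu0, hu.2⟩)
      have h2' := hlt' u hu
      rw [h1 u hu0]
      linarith
    have hconst : ∀ s ∈ Set.Ioc s₀ t, η s = η t := by
      intro s hs
      exact h3c s t (hs₀0.trans hs.1.le) hs.2
        (fun u hu => hφlt u ⟨lt_of_lt_of_le hs.1 hu.1, hu.2⟩)
    -- take the limit s → s₀⁺
    have hcw : ContinuousWithinAt η (Set.Ioc s₀ t) s₀ :=
      (hηc s₀ hs₀0).mono (fun u hu => hs₀0.trans hu.1.le)
    have hnb : (nhdsWithin s₀ (Set.Ioc s₀ t)).NeBot := by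
      rw [← mem_closure_iff_nhdsWithin_neBot, closure_Ioc hs₀t.ne]
      exact ⟨le_refl s₀, hs₀t.le⟩
    have htends : Filter.Tendsto η (nhdsWithin s₀ (Set.Ioc s₀ t)) (nhds (η s₀)) := hcw
    have htends' : Filter.Tendsto η (nhdsWithin s₀ (Set.Ioc s₀ t)) (nhds (η t)) := by
      refine Filter.Tendsto.congr' ?_ tendsto_const_nhds
      filter_upwards [self_mem_nhdsWithin] with u hu
      exact (hconst u hu).symm
    have heq : η s₀ = η t := tendsto_nhds_unique htends htends'
    have := hs₀A.2
    rw [Set.mem_preimage, Set.mem_Iic, heq] at this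
    exact absurd this (not_le.mpr hlt)
  exact ⟨le_antisymm hle hMle, h1 t ht⟩
end

section
/- Let h : [0,∞) → ℝ be continuous and let ψ : [0,∞) → ℝ be continuous and non-decreasing. Let φ(t) = ψ(t) − sup_{s∈[0,t]} max(ψ(s) − h(s), 0) be the Skorohod-map image of ψ. Then for every t ≥ 0, φ(t) ≥ min( ψ(0), inf_{s∈[0,t]} h(s) ). -/
/-- Lower bound for the Skorohod-map image of a non-decreasing input `ψ` on the
time-varying domain `(−∞, h(·)]`: for every `t ≥ 0`,
`φ(t) ≥ min(ψ(0), inf_{s∈[0,t]} h(s))`. -/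
theorem skorohod_map_lower_bound
    (h ψ : ℝ → ℝ)
    (hh : ContinuousOn h (Set.Ici 0))
    (hψc : ContinuousOn ψ (Set.Ici 0))
    (hψmono : MonotoneOn ψ (Set.Ici 0))
    (φ : ℝ → ℝ)
    (hφ : ∀ t, 0 ≤ t →
      φ t = ψ t - sSup ((fun s => max (ψ s - h s) 0) '' Set.Icc 0 t)) :
    ∀ t, 0 ≤ t → min (ψ 0) (sInf (h '' Set.Icc 0 t)) ≤ φ t := by
  intro t ht
  have hsub : Set.Icc (0:ℝ) t ⊆ Set.Ici 0 := Set.Icc_subset_Ici_self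
  have hfc : ContinuousOn (fun s => max (ψ s - h s) 0) (Set.Icc 0 t) :=
    ((hψc.mono hsub).sub (hh.mono hsub)).sup continuousOn_const
  have hK : IsCompact ((fun s => max (ψ s - h s) 0) '' Set.Icc 0 t) :=
    (isCompact_Icc).image_of_continuousOn hfc
  have hne : ((fun s => max (ψ s - h s) 0) '' Set.Icc 0 t).Nonempty :=
    ⟨_, Set.mem_image_of_mem _ (Set.left_mem_Icc.2 ht)⟩
  obtain ⟨s₀, hs₀, hs₀eq⟩ := hK.sSup_mem hne
  rw [hφ t ht, ← hs₀eq]; dsimp only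
  rcases le_or_gt (ψ s₀ - h s₀) 0 with hc | hc
  · have : max (ψ s₀ - h s₀) 0 = 0 := max_eq_right hc
    rw [this, sub_zero]
    exact le_trans (min_le_left _ _)
      (hψmono (Set.self_mem_Ici) (Set.mem_Ici.2 ht) ht)
  · have : max (ψ s₀ - h s₀) 0 = ψ s₀ - h s₀ := max_eq_left hc.le
    rw [this]
    have h1 : ψ s₀ ≤ ψ t := hψmono (hsub hs₀) (Set.mem_Ici.2 ht) hs₀.2
    have h2 : sInf (h '' Set.Icc 0 t) ≤ h s₀ := by
      have hKh : IsCompact (h '' Set.Icc 0 t) :=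
        isCompact_Icc.image_of_continuousOn (hh.mono hsub)
      exact csInf_le hKh.bddBelow (Set.mem_image_of_mem _ hs₀)
    calc min (ψ 0) (sInf (h '' Set.Icc 0 t)) ≤ h s₀ := (min_le_right _ _).trans h2
      _ ≤ ψ t - (ψ s₀ - h s₀) := by linarith
end

section
/- Let T > 0 and let H : [0,∞) × [0,T] → [0,∞) be continuous, such that (i) for each t ∈ [0,T], the map y ↦ H(y,t) is strictly decreasing on { y ≥ 0 : H(y,t) > 0 }, and (ii) sup_{t∈[0,T]} H(y,t) → 0 as y → ∞. Fix δ > 0. Define χ(x,t) = inf{ y ≥ 0 : H(y,t) ≤ x } for x > 0, and χ̃(x,t) = χ(max(x, δ), t) for x ≥ 0, t ∈ [0,T]. Then χ̃ is a continuous function on [0,∞) × [0,T]. -/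
/-- Continuity of the truncated generalized inverse `χ̃(x,t) = χ(max(x,δ), t)`,
`χ(x,t) = inf{y ≥ 0 : H(y,t) ≤ x}`, for a continuous non-negative `H` on
`[0,∞) × [0,T]` that is strictly decreasing in `y` on its positivity set and
tends to `0` uniformly in `t` as `y → ∞`. -/
theorem chi_tilde_continuous
    (T : ℝ) (hT : 0 < T)
    (H : ℝ → ℝ → ℝ)
    (hHcont : ContinuousOn (fun p : ℝ × ℝ => H p.1 p.2) (Set.Ici 0 ×ˢ Set.Icc 0 T))
    (hHnonneg : ∀ y t, 0 ≤ y → t ∈ Set.Icc 0 T → 0 ≤ H y t)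
    -- (i) strict decrease in `y` on the positivity set
    (hHstrict : ∀ t ∈ Set.Icc (0:ℝ) T,
      ∀ y₁ y₂, 0 ≤ y₁ → y₁ < y₂ → 0 < H y₂ t → H y₂ t < H y₁ t)
    -- (ii) uniform decay at infinity
    (hHdecay : Filter.Tendsto (fun y => sSup ((fun t => H y t) '' Set.Icc 0 T))
      Filter.atTop (nhds 0))
    (δ : ℝ) (hδ : 0 < δ)
    (chi : ℝ → ℝ → ℝ)
    (hchi : ∀ x t, 0 < x → chi x t = sInf {y : ℝ | 0 ≤ y ∧ H y t ≤ x})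
    (chiT : ℝ → ℝ → ℝ)
    (hchiT : ∀ x t, chiT x t = chi (max x δ) t) :
    ContinuousOn (fun p : ℝ × ℝ => chiT p.1 p.2) (Set.Ici 0 ×ˢ Set.Icc 0 T) := by
  -- continuity in t for fixed y ≥ 0
  have hHt : ∀ y : ℝ, 0 ≤ y → ContinuousOn (fun t => H y t) (Set.Icc 0 T) := by
    intro y hy
    exact hHcont.comp (Continuous.continuousOn (by continuity))
      (fun t ht => Set.mk_mem_prod hy ht)
  -- a point Y where H is uniformly < δ
  obtain ⟨Y, hYΔ, hY0⟩ : ∃ Y : ℝ, (sSup ((fun t => H Y t) '' Set.Icc 0 T) < δ) ∧ 0 ≤ Y := by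
    have h1 : ∀ᶠ y in Filter.atTop,
        sSup ((fun t => H y t) '' Set.Icc 0 T) < δ :=
      hHdecay.eventually (Filter.Tendsto.eventually_lt_const hδ Filter.tendsto_id)
    exact (h1.and (Filter.eventually_ge_atTop 0)).exists
  have hYlt : ∀ t ∈ Set.Icc (0:ℝ) T, H Y t < δ := by
    intro t ht
    refine lt_of_le_of_lt ?_ hYΔ
    refine le_csSup ?_ ⟨t, ht, rfl⟩
    exact (isCompact_Icc.image_of_continuousOn (hHt Y hY0)).bddAbove
  -- the sets S x t
  set S : ℝ → ℝ → Set ℝ := fun x t => {y : ℝ | 0 ≤ y ∧ H y t ≤ x} with hS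
  have hSne : ∀ x t, δ ≤ x → t ∈ Set.Icc (0:ℝ) T → (S x t).Nonempty := by
    intro x t hx ht
    exact ⟨Y, hY0, ((hYlt t ht).le.trans hx)⟩
  have hSbdd : ∀ x t, BddBelow (S x t) := fun x t => ⟨0, fun y hy => hy.1⟩
  have hHy : ∀ t ∈ Set.Icc (0:ℝ) T, ContinuousOn (fun y => H y t) (Set.Ici 0) := by
    intro t ht
    exact hHcont.comp (Continuous.continuousOn (by continuity))
      (fun y hy => Set.mk_mem_prod hy ht)
  have hSclosed : ∀ x t, t ∈ Set.Icc (0:ℝ) T → IsClosed (S x t) := by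
    intro x t ht
    have hEq : S x t = Set.Ici 0 ∩ (fun y => H y t) ⁻¹' Set.Iic x := by
      ext y; simp [hS, Set.mem_Ici, Set.mem_Iic]
    rw [hEq]
    exact (hHy t ht).preimage_isClosed_of_isClosed isClosed_Ici isClosed_Iic
  -- membership of the inf
  have hInfMem : ∀ x t, δ ≤ x → t ∈ Set.Icc (0:ℝ) T → sInf (S x t) ∈ S x t := by
    intro x t hx ht
    exact (hSclosed x t ht).csInf_mem (hSne x t hx ht) (hSbdd x t)
  -- below the inf, H is > x
  have hBelow : ∀ x t, δ ≤ x → t ∈ Set.Icc (0:ℝ) T →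
      ∀ y, 0 ≤ y → y < sInf (S x t) → x < H y t := by
    intro x t hx ht y hy hlt
    by_contra hcon
    push_neg at hcon
    exact absurd (csInf_le (hSbdd x t) ⟨hy, hcon⟩) (not_le.2 hlt)
  -- main proof
  rintro ⟨x₀, t₀⟩ ⟨hx₀, ht₀⟩
  simp only [Set.mem_Ici] at hx₀
  rw [Metric.continuousWithinAt_iff]
  intro ε hε
  set xb : ℝ := max x₀ δ with hxb
  have hxbδ : δ ≤ xb := le_max_right _ _
  have hxbpos : 0 < xb := lt_of_lt_of_le hδ hxbδ
  set y₀ : ℝ := sInf (S xb t₀) with hy₀def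
  have hy₀mem := hInfMem xb t₀ hxbδ ht₀
  have hy₀nonneg : 0 ≤ y₀ := hy₀mem.1
  have hy₀le : H y₀ t₀ ≤ xb := hy₀mem.2
  set ε' : ℝ := ε / 2 with hε'def
  have hε' : 0 < ε' := by positivity
  -- Upper bound radius
  have upper : ∃ r > 0, ∀ x t, t ∈ Set.Icc (0:ℝ) T → |x - x₀| < r → dist t t₀ < r →
      sInf (S (max x δ) t) ≤ y₀ + ε' := by
    set y₁ : ℝ := y₀ + ε' with hy₁def
    have hy₁nonneg : 0 ≤ y₁ := by positivity
    have hy₁lt : H y₁ t₀ < xb := by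
      rcases (hHnonneg y₁ t₀ hy₁nonneg ht₀).eq_or_lt with h | h
      · rw [← h]; exact hxbpos
      · exact lt_of_lt_of_le
          (hHstrict t₀ ht₀ y₀ y₁ hy₀nonneg (by linarith) h) hy₀le
    set η : ℝ := (xb - H y₁ t₀) / 2 with hηdef
    have hη : 0 < η := by simp only [hηdef]; linarith
    obtain ⟨r₁, hr₁, hr₁t⟩ := Metric.continuousWithinAt_iff.mp ((hHt y₁ hy₁nonneg) t₀ ht₀) η hη
    refine ⟨min r₁ η, lt_min hr₁ hη, fun x t ht hxx htt => ?_⟩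
    have hHyt : H y₁ t < xb - η := by
      have := hr₁t ht (lt_of_lt_of_le htt (min_le_left _ _))
      rw [Real.dist_eq] at this
      have := abs_lt.1 this
      simp only [hηdef]; linarith [this.1, this.2]
    have hmax : xb - η ≤ max x δ := by
      have h1 : |max x δ - max x₀ δ| ≤ |x - x₀| := abs_max_sub_max_le_abs _ _ _
      have h2 : |x - x₀| < η := lt_of_lt_of_le hxx (min_le_right _ _)
      have := abs_lt.1 (lt_of_le_of_lt h1 h2)
      simp only [hxb]; linarith [this.1]
    exact csInf_le (hSbdd _ _) ⟨hy₁nonneg, le_trans hHyt.le hmax⟩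
  -- Lower bound radius
  have lower : ∃ r > 0, ∀ x t, t ∈ Set.Icc (0:ℝ) T → |x - x₀| < r → dist t t₀ < r →
      y₀ - ε' ≤ sInf (S (max x δ) t) := by
    by_cases hcase : y₀ ≤ ε'
    · refine ⟨1, one_pos, fun x t ht _ _ => ?_⟩
      have hx' : δ ≤ max x δ := le_max_right _ _
      have := (hInfMem (max x δ) t hx' ht).1
      linarith
    · push_neg at hcase
      set y₂ : ℝ := y₀ - ε' with hy₂def
      have hy₂nonneg : 0 ≤ y₂ := by simp only [hy₂def]; linarith
      have hy₂lt : y₂ < y₀ := by simp only [hy₂def]; linarith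
      have hH₂ : xb < H y₂ t₀ := hBelow xb t₀ hxbδ ht₀ y₂ hy₂nonneg hy₂lt
      set η : ℝ := (H y₂ t₀ - xb) / 2 with hηdef
      have hη : 0 < η := by simp only [hηdef]; linarith
      obtain ⟨r₂, hr₂, hr₂t⟩ :=
        Metric.continuousWithinAt_iff.mp ((hHt y₂ hy₂nonneg) t₀ ht₀) η hη
      refine ⟨min r₂ η, lt_min hr₂ hη, fun x t ht hxx htt => ?_⟩
      have hHyt : xb + η < H y₂ t := by
        have := hr₂t ht (lt_of_lt_of_le htt (min_le_left _ _))
        rw [Real.dist_eq] at this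
        have := abs_lt.1 this
        simp only [hηdef]; linarith [this.1, this.2]
      have hmax : max x δ < xb + η := by
        have h1 : |max x δ - max x₀ δ| ≤ |x - x₀| := abs_max_sub_max_le_abs _ _ _
        have h2 : |x - x₀| < η := lt_of_lt_of_le hxx (min_le_right _ _)
        have := abs_lt.1 (lt_of_le_of_lt h1 h2)
        simp only [hxb]; linarith [this.2]
      refine le_csInf (hSne (max x δ) t (le_max_right _ _) ht) (fun y hy => ?_)
      by_contra hcon
      push_neg at hcon
      have hpos : 0 < H y₂ t := lt_trans (by linarith) hHyt
      have : H y₂ t < H y t := hHstrict t ht y y₂ hy.1 hcon hpos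
      have : max x δ < H y t := by linarith
      exact absurd hy.2 (not_le.2 this)
  obtain ⟨r₁, hr₁, hU⟩ := upper
  obtain ⟨r₂, hr₂, hL⟩ := lower
  refine ⟨min r₁ r₂, lt_min hr₁ hr₂, ?_⟩
  rintro ⟨x, t⟩ ⟨hx, ht⟩ hdist
  simp only [Set.mem_Ici] at hx
  rw [Prod.dist_eq] at hdist
  have hdx : dist x x₀ < min r₁ r₂ := lt_of_le_of_lt (le_max_left _ _) hdist
  have hdt : dist t t₀ < min r₁ r₂ := lt_of_le_of_lt (le_max_right _ _) hdist
  rw [Real.dist_eq] at hdx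
  have hU' := hU x t ht (lt_of_lt_of_le hdx (min_le_left _ _))
    (lt_of_lt_of_le hdt (min_le_left _ _))
  have hL' := hL x t ht (lt_of_lt_of_le hdx (min_le_right _ _))
    (lt_of_lt_of_le hdt (min_le_right _ _))
  have hrw1 : chiT x t = sInf (S (max x δ) t) := by
    rw [hchiT, hchi _ _ (lt_of_lt_of_le hδ (le_max_right _ _))]
  have hrw2 : chiT x₀ t₀ = y₀ := by
    rw [hchiT, hchi _ _ hxbpos]
  simp only [hrw1, hrw2, Real.dist_eq]
  rw [abs_lt]
  constructor <;> [skip; skip] <;> linarith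
end

section
/- Let 𝒬₀ be a finite non-atomic Borel measure on [0,∞), let ν be a finite Borel measure on [0,∞), and let λ > 0. For x, t ≥ 0 define the finite Borel measure 𝒢(x,t) on [0,∞) by 𝒢(x,t)(B) = 𝒬₀( (B ∩ [x,∞)) + t ) + λ ∫₀ᵗ ν( (B ∩ [x,∞)) + t − s ) ds for Borel sets B ⊆ [0,∞), where A + u = { a + u : a ∈ A }. Then the map (x,t) ↦ 𝒢(x,t) is continuous from [0,∞) × [0,∞) into the space of finite Borel measures on [0,∞) equipped with the topology of weak convergence: whenever (x_n, t_n) → (x, t), one has ∫ f d𝒢(x_n,t_n) → ∫ f d𝒢(x,t) for every bounded continuous f : [0,∞) → ℝ. -/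
open MeasureTheory

/-- Integral of a bounded function against the measure
`𝒢(x,t)(B) = 𝒬₀((B ∩ [x,∞)) + t) + λ ∫₀ᵗ ν((B ∩ [x,∞)) + t − s) ds`, in its
equivalent form
`⟨f, 𝒢(x,t)⟩ = ∫_{[x+t,∞)} f(y−t) d𝒬₀(y) + λ ∫₀ᵗ ∫_{[x+s,∞)} f(y−s) dν(y) ds`. -/
noncomputable def pairG (Q0 ν : Measure ℝ) (lam : ℝ) (f : ℝ → ℝ) (x t : ℝ) : ℝ :=
  (∫ y in Set.Ici (x + t), f (y - t) ∂Q0) +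
    lam * ∫ s in (0:ℝ)..t, ∫ y in Set.Ici (x + s), f (y - s) ∂ν

open Filter Set in
/-- Convergence of the inner (translated tail) integral when the cut point and the
translation parameter both converge, provided the limit cut point is not an atom. -/
lemma innerTendsto (Q : Measure ℝ) [IsFiniteMeasure Q]
    (f : ℝ → ℝ) (hf : Continuous f) (M : ℝ) (hM : ∀ y, |f y| ≤ M)
    (a b : ℝ) (hQa : Q {a} = 0)
    (as bs : ℕ → ℝ)
    (ha : Filter.Tendsto as Filter.atTop (nhds a))
    (hb : Filter.Tendsto bs Filter.atTop (nhds b)) :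
    Filter.Tendsto (fun n => ∫ y in Set.Ici (as n), f (y - bs n) ∂Q) Filter.atTop
      (nhds (∫ y in Set.Ici a, f (y - b) ∂Q)) := by
  have key : ∀ (c d : ℝ), (∫ y in Set.Ici c, f (y - d) ∂Q)
      = ∫ y, (Set.Ici c).indicator (fun y => f (y - d)) y ∂Q := fun c d =>
    (integral_indicator measurableSet_Ici).symm
  simp only [key]
  apply tendsto_integral_of_dominated_convergence (fun _ => M)
  · intro n
    exact ((hf.comp (continuous_sub_right (bs n))).aestronglyMeasurable).indicator
      measurableSet_Ici
  · exact integrable_const M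
  · intro n
    filter_upwards with y
    calc ‖(Set.Ici (as n)).indicator (fun y => f (y - bs n)) y‖
        ≤ ‖f (y - bs n)‖ := norm_indicator_le_norm_self _ _
      _ ≤ M := hM _
  · have hne : ∀ᵐ y ∂Q, y ≠ a := by
      rw [ae_iff]
      simpa using hQa
    filter_upwards [hne] with y hy
    rcases lt_or_gt_of_ne hy with h | h
    · -- y < a : eventually y < as n, indicator vanishes
      have hev : ∀ᶠ n in atTop, y < as n := ha.eventually_const_lt h
      have hlim0 : (Set.Ici a).indicator (fun y => f (y - b)) y = 0 :=
        Set.indicator_of_notMem (by simpa using not_le.mpr h) _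
      rw [hlim0]
      refine Filter.Tendsto.congr' ?_ tendsto_const_nhds
      filter_upwards [hev] with n hn
      exact (Set.indicator_of_notMem (by simpa using not_le.mpr hn) _).symm
    · -- y > a
      have hev : ∀ᶠ n in atTop, as n < y := ha.eventually_lt_const h
      have hlim : (Set.Ici a).indicator (fun y => f (y - b)) y = f (y - b) :=
        Set.indicator_of_mem (le_of_lt h) _
      rw [hlim]
      have hconv : Filter.Tendsto (fun n => f (y - bs n)) atTop (nhds (f (y - b))) :=
        (hf.tendsto _).comp (tendsto_const_nhds.sub hb)
      refine Filter.Tendsto.congr' ?_ hconv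
      filter_upwards [hev] with n hn
      exact (Set.indicator_of_mem (le_of_lt hn) (fun y => f (y - bs n))).symm

/-- Weak continuity of `(x,t) ↦ 𝒢(x,t)`: if `(xₙ,tₙ) → (x,t)` in `[0,∞)²`, then
`∫ f d𝒢(xₙ,tₙ) → ∫ f d𝒢(x,t)` for every bounded continuous `f`. Here `𝒬₀` is a
finite non-atomic Borel measure on `[0,∞)` and `ν` a finite Borel measure on
`[0,∞)`. -/
theorem pairG_weakly_continuous
    (Q0 ν : Measure ℝ) [IsFiniteMeasure Q0] [IsFiniteMeasure ν]
    (hQsupp : Q0 (Set.Iio 0) = 0) (hνsupp : ν (Set.Iio 0) = 0)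
    (hnonatomic : ∀ x : ℝ, Q0 {x} = 0)
    (lam : ℝ) (hlam : 0 < lam)
    (x t : ℝ) (hx : 0 ≤ x) (ht : 0 ≤ t)
    (xs ts : ℕ → ℝ) (hxs : ∀ n, 0 ≤ xs n) (hts : ∀ n, 0 ≤ ts n)
    (hxlim : Filter.Tendsto xs Filter.atTop (nhds x))
    (htlim : Filter.Tendsto ts Filter.atTop (nhds t)) :
    ∀ f : ℝ → ℝ, Continuous f → (∃ M, ∀ y, |f y| ≤ M) →
      Filter.Tendsto (fun n => pairG Q0 ν lam f (xs n) (ts n)) Filter.atTop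
        (nhds (pairG Q0 ν lam f x t)) := by
  classical
  rintro f hf ⟨M, hM⟩
  have hM0 : 0 ≤ M := le_trans (abs_nonneg _) (hM 0)
  -- The constant bound for the inner ν-integral
  set C : ℝ := M * (ν Set.univ).toReal with hC
  have hC0 : 0 ≤ C := mul_nonneg hM0 ENNReal.toReal_nonneg
  -- first term
  have h1 : Filter.Tendsto (fun n => ∫ y in Set.Ici (xs n + ts n), f (y - ts n) ∂Q0)
      Filter.atTop (nhds (∫ y in Set.Ici (x + t), f (y - t) ∂Q0)) :=
    innerTendsto Q0 f hf M hM (x + t) t (hnonatomic _) _ _ (hxlim.add htlim) htlim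
  -- measurability of the inner integral as a function of `s`
  have hgm : ∀ c : ℝ, StronglyMeasurable fun s : ℝ => ∫ y in Set.Ici (c + s), f (y - s) ∂ν := by
    intro c
    have hrw : ∀ s : ℝ, (∫ y in Set.Ici (c + s), f (y - s) ∂ν)
        = ∫ y, ({p : ℝ × ℝ | c + p.1 ≤ p.2}.indicator (fun p => f (p.2 - p.1))) (s, y) ∂ν := by
      intro s
      rw [← integral_indicator measurableSet_Ici]
      refine integral_congr_ae (Filter.Eventually.of_forall fun y => ?_)
      simp only [Set.indicator_apply, Set.mem_Ici, Set.mem_setOf_eq]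
    simp only [hrw]
    have hset : MeasurableSet {p : ℝ × ℝ | c + p.1 ≤ p.2} :=
      measurableSet_le (by fun_prop) measurable_snd
    have hmeas : StronglyMeasurable
        ({p : ℝ × ℝ | c + p.1 ≤ p.2}.indicator (fun p => f (p.2 - p.1))) :=
      ((hf.measurable.comp (measurable_snd.sub measurable_fst)).indicator hset).stronglyMeasurable
    exact hmeas.integral_prod_right'
  -- uniform bound on the inner integral
  have hg_bdd : ∀ c s : ℝ, ‖∫ y in Set.Ici (c + s), f (y - s) ∂ν‖ ≤ C := by
    intro c s
    have : ‖∫ y in Set.Ici (c + s), f (y - s) ∂ν‖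
        ≤ M * ((ν.restrict (Set.Ici (c + s))) Set.univ).toReal := by
      apply norm_integral_le_of_norm_le_const
      filter_upwards with y
      simpa [Real.norm_eq_abs] using hM (y - s)
    refine le_trans this ?_
    apply mul_le_mul_of_nonneg_left _ hM0
    apply ENNReal.toReal_mono (measure_ne_top _ _)
    rw [Measure.restrict_apply_univ]
    exact measure_mono (Set.subset_univ _)
  -- a bound `T` for all the `ts n` and `t`
  obtain ⟨T, hT⟩ : ∃ T : ℝ, (∀ n, ts n ≤ T) ∧ t ≤ T := by
    obtain ⟨T0, hT0⟩ := htlim.bddAbove_range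
    refine ⟨max T0 t, fun n => le_max_of_le_left (hT0 ⟨n, rfl⟩), le_max_right _ _⟩
  -- second term, as integrals of indicators over ℝ
  have key2 : ∀ (c : ℝ) (u : ℝ), 0 ≤ u →
      (∫ s in (0:ℝ)..u, ∫ y in Set.Ici (c + s), f (y - s) ∂ν)
      = ∫ s, (Set.Ioc (0:ℝ) u).indicator
          (fun s => ∫ y in Set.Ici (c + s), f (y - s) ∂ν) s := by
    intro c u hu
    rw [intervalIntegral.integral_of_le hu, ← integral_indicator measurableSet_Ioc]
  have h2 : Filter.Tendsto
      (fun n => ∫ s in (0:ℝ)..ts n, ∫ y in Set.Ici (xs n + s), f (y - s) ∂ν)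
      Filter.atTop (nhds (∫ s in (0:ℝ)..t, ∫ y in Set.Ici (x + s), f (y - s) ∂ν)) := by
    simp only [fun n => key2 (xs n) (ts n) (hts n), key2 x t ht]
    apply tendsto_integral_of_dominated_convergence
      ((Set.Icc (0:ℝ) T).indicator fun _ => C)
    · intro n
      exact ((hgm (xs n)).indicator measurableSet_Ioc).aestronglyMeasurable
    · apply MeasureTheory.IntegrableOn.integrable_indicator _ measurableSet_Icc
      exact integrableOn_const measure_Icc_lt_top.ne
    · intro n
      filter_upwards with s
      by_cases hs : s ∈ Set.Ioc (0:ℝ) (ts n)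
      · rw [Set.indicator_of_mem hs]
        have hsIcc : s ∈ Set.Icc (0:ℝ) T := ⟨le_of_lt hs.1, le_trans hs.2 (hT.1 n)⟩
        rw [Set.indicator_of_mem hsIcc]
        exact hg_bdd _ _
      · rw [Set.indicator_of_notMem hs]
        simp only [norm_zero]
        exact Set.indicator_nonneg (fun _ _ => hC0) _
    · -- a.e. pointwise convergence in `s`
      have hcnull : (volume : Measure ℝ) {s : ℝ | ν {x + s} ≠ 0} = 0 := by
        have hcount : Set.Countable {y : ℝ | 0 < ν {y}} :=
          MeasureTheory.Measure.countable_meas_pos_of_disjoint_iUnion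
            (As := fun y : ℝ => {y}) (fun y => measurableSet_singleton y)
            (fun i j hij => by simpa [Function.onFun] using hij)
        have hsub : {s : ℝ | ν {x + s} ≠ 0} ⊆ (fun y => y - x) '' {y : ℝ | 0 < ν {y}} := by
          intro s hs
          exact ⟨x + s, pos_iff_ne_zero.mpr hs, by ring⟩
        exact measure_mono_null hsub (Set.Countable.measure_zero (hcount.image _) _)
      have hae : ∀ᵐ s : ℝ, s ≠ t ∧ ν {x + s} = 0 := by
        rw [ae_iff]
        have hnull : (volume : Measure ℝ) ({t} ∪ {s : ℝ | ν {x + s} ≠ 0}) = 0 := by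
          rw [measure_union_null_iff]
          exact ⟨measure_singleton t, hcnull⟩
        refine measure_mono_null ?_ hnull
        intro s hs
        simp only [Set.mem_setOf_eq, not_and_or, not_not] at hs
        rcases hs with hs | hs
        · exact Or.inl (by simpa using hs)
        · exact Or.inr hs
      filter_upwards [hae] with s hs
      obtain ⟨hst, hsatom⟩ := hs
      have hgconv : Filter.Tendsto (fun n => ∫ y in Set.Ici (xs n + s), f (y - s) ∂ν)
          Filter.atTop (nhds (∫ y in Set.Ici (x + s), f (y - s) ∂ν)) :=
        innerTendsto ν f hf M hM (x + s) s hsatom (fun n => xs n + s) (fun _ => s)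
          (hxlim.add tendsto_const_nhds) tendsto_const_nhds
      by_cases hmem : s ∈ Set.Ioc (0:ℝ) t
      · -- then s < t since s ≠ t, so eventually s ∈ Ioc 0 (ts n)
        have hslt : s < t := lt_of_le_of_ne hmem.2 hst
        have hev : ∀ᶠ n in Filter.atTop, s < ts n := htlim.eventually_const_lt hslt
        rw [Set.indicator_of_mem hmem]
        refine Filter.Tendsto.congr' ?_ hgconv
        filter_upwards [hev] with n hn
        exact (Set.indicator_of_mem (show s ∈ Set.Ioc (0:ℝ) (ts n) from ⟨hmem.1, le_of_lt hn⟩)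
          (fun s => ∫ y in Set.Ici (xs n + s), f (y - s) ∂ν)).symm
      · rw [Set.indicator_of_notMem hmem]
        rcases le_or_gt s 0 with hs0 | hs0
        · -- s ≤ 0 : never in Ioc 0 (ts n)
          refine Filter.Tendsto.congr' ?_ tendsto_const_nhds
          filter_upwards with n
          exact (Set.indicator_of_notMem (fun h => absurd h.1 (not_lt.mpr hs0))
            (fun s => ∫ y in Set.Ici (xs n + s), f (y - s) ∂ν)).symm
        · -- t < s : eventually ts n < s
          have hst' : t < s := by
            by_contra hle
            exact hmem ⟨hs0, not_lt.mp hle⟩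
          have hev : ∀ᶠ n in Filter.atTop, ts n < s := htlim.eventually_lt_const hst'
          refine Filter.Tendsto.congr' ?_ tendsto_const_nhds
          filter_upwards [hev] with n hn
          exact (Set.indicator_of_notMem (fun h => absurd h.2 (not_le.mpr hn))
            (fun s => ∫ y in Set.Ici (xs n + s), f (y - s) ∂ν)).symm
  simpa [pairG] using h1.add ((tendsto_const_nhds.mul h2))
end

section
/- Let 0 < μ < 1 and 0 < θ < 1, and assume 1 − μ < (1−θ) θ^{θ/(1−θ)}. Define f(s) = 1 − μ + e^{−s} − e^{−θ s} and g(t) = ∫₀ᵗ f(s) ds = 1 − 1/θ + (1−μ)t − e^{−t} + (1/θ) e^{−θ t}. Then f has a smallest zero a₁ ∈ (0,∞), the set { t ≥ a₁ : g(t) = g(a₁) } has a largest element a₂ ∈ [a₁,∞), and the function η(t) := sup_{s∈[0,t]} max(g(s), 0) is given piecewise by: η(t) = g(t) for 0 ≤ t ≤ a₁; η(t) = g(a₁) for a₁ ≤ t ≤ a₂; and η(t) = g(t) for t ≥ a₂. -/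
open Real Set

/-- Case 3b of the example (`0 < μ < 1`, `0 < θ < 1`,
`1 − μ < (1−θ)θ^{θ/(1−θ)}`): with `f(s) = 1 − μ + e^{−s} − e^{−θs}` and
`g(t) = ∫₀ᵗ f = 1 − 1/θ + (1−μ)t − e^{−t} + (1/θ)e^{−θt}`, the function `f` has
a smallest zero `a₁ ∈ (0,∞)`, the set `{t ≥ a₁ : g(t) = g(a₁)}` has a largest
element `a₂`, and the regulator `η(t) = sup_{s∈[0,t]} (g(s))⁺` equals `g` on
`[0,a₁]`, the constant `g(a₁)` on `[a₁,a₂]`, and `g` again on `[a₂,∞)`. -/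
theorem example_case3b
    (μ θ : ℝ) (hμ0 : 0 < μ) (hμ1 : μ < 1) (hθ0 : 0 < θ) (hθ1 : θ < 1)
    (hcrit : 1 - μ < (1 - θ) * θ ^ (θ / (1 - θ)))
    (f g η : ℝ → ℝ)
    (hf : ∀ s, f s = 1 - μ + Real.exp (-s) - Real.exp (-θ * s))
    (hg : ∀ t, g t = 1 - 1/θ + (1 - μ) * t - Real.exp (-t) + (1/θ) * Real.exp (-θ * t))
    (hη : ∀ t, 0 ≤ t → η t = sSup ((fun s => max (g s) 0) '' Set.Icc 0 t)) :
    (∀ t, 0 ≤ t → g t = ∫ s in (0:ℝ)..t, f s) ∧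
    ∃ a₁ a₂ : ℝ, 0 < a₁ ∧
      IsLeast {s : ℝ | f s = 0} a₁ ∧
      IsGreatest {t : ℝ | a₁ ≤ t ∧ g t = g a₁} a₂ ∧
      (∀ t, 0 ≤ t → t ≤ a₁ → η t = g t) ∧
      (∀ t, a₁ ≤ t → t ≤ a₂ → η t = g a₁) ∧
      (∀ t, a₂ ≤ t → η t = g t) := by
  have hθ0' : θ ≠ 0 := ne_of_gt hθ0
  have h1θ : (0:ℝ) < 1 - θ := by linarith
  have h1μ : (0:ℝ) < 1 - μ := by linarith
  have hffun : f = fun s => 1 - μ + Real.exp (-s) - Real.exp (-θ * s) := funext hf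
  have hgfun : g = fun t => 1 - 1/θ + (1 - μ) * t - Real.exp (-t) + (1/θ) * Real.exp (-θ * t) :=
    funext hg
  have hfc : Continuous f := by rw [hffun]; fun_prop
  have hgc : Continuous g := by rw [hgfun]; fun_prop
  -- basic derivatives
  have he1 : ∀ t : ℝ, HasDerivAt (fun t => Real.exp (-t)) (-Real.exp (-t)) t := by
    intro t
    simpa using (hasDerivAt_neg t).exp
  have he2 : ∀ t : ℝ, HasDerivAt (fun t => Real.exp (-θ * t)) (-θ * Real.exp (-θ * t)) t := by
    intro t
    have h2 : HasDerivAt (fun t : ℝ => -θ * t) (-θ) t := by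
      simpa using (hasDerivAt_id t).const_mul (-θ)
    simpa [mul_comm] using h2.exp
  have hg' : ∀ t, HasDerivAt g (f t) t := by
    intro t
    have c1 : HasDerivAt (fun t : ℝ => (1 - μ) * t) (1 - μ) t := by
      simpa using (hasDerivAt_id t).const_mul (1 - μ)
    have h := (((hasDerivAt_const t (1 - 1/θ)).add c1).sub (he1 t)).add
      ((he2 t).const_mul (1/θ))
    rw [hgfun, hf]
    refine h.congr_deriv ?_
    field_simp
    ring
  have hf' : ∀ t, HasDerivAt f (-Real.exp (-t) + θ * Real.exp (-θ * t)) t := by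
    intro t
    have h := (((hasDerivAt_const t (1 - μ)).add (he1 t)).sub (he2 t))
    rw [hffun]
    refine h.congr_deriv ?_
    ring
  have hg0 : g 0 = 0 := by rw [hg]; simp
  have hf0 : 0 < f 0 := by rw [hf]; simp; linarith
  -- the critical point of f
  set s₀ : ℝ := Real.log θ / (θ - 1) with hs₀def
  have hlogθ : Real.log θ < 0 := Real.log_neg hθ0 hθ1
  have hs₀pos : 0 < s₀ := div_pos_of_neg_of_neg hlogθ (by linarith)
  -- key sign inequalities for f'
  have hkeylt : ∀ t : ℝ, t < s₀ → θ * Real.exp (-θ * t) < Real.exp (-t) := by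
    intro t ht
    rw [show θ * Real.exp (-θ * t) = Real.exp (Real.log θ + -θ * t) by
      rw [Real.exp_add, Real.exp_log hθ0], Real.exp_lt_exp]
    rw [hs₀def, lt_div_iff_of_neg (by linarith : θ - 1 < 0)] at ht
    nlinarith
  have hkeygt : ∀ t : ℝ, s₀ < t → Real.exp (-t) < θ * Real.exp (-θ * t) := by
    intro t ht
    rw [show θ * Real.exp (-θ * t) = Real.exp (Real.log θ + -θ * t) by
      rw [Real.exp_add, Real.exp_log hθ0], Real.exp_lt_exp]
    rw [hs₀def, div_lt_iff_of_neg (by linarith : θ - 1 < 0)] at ht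
    nlinarith
  have fanti : StrictAntiOn f (Iic s₀) := by
    apply strictAntiOn_of_deriv_neg (convex_Iic _) hfc.continuousOn
    intro x hx
    rw [interior_Iic] at hx
    rw [(hf' x).deriv]
    have := hkeylt x hx
    linarith
  have fmono : StrictMonoOn f (Ici s₀) := by
    apply strictMonoOn_of_deriv_pos (convex_Ici _) hfc.continuousOn
    intro x hx
    rw [interior_Ici] at hx
    rw [(hf' x).deriv]
    have := hkeygt x hx
    linarith
  -- value of f at the critical point
  have hrw1 : Real.exp (-θ * s₀) = θ ^ (θ / (1 - θ)) := by
    rw [Real.rpow_def_of_pos hθ0]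
    congr 1
    rw [hs₀def]
    field_simp [sub_ne_zero.mpr (ne_of_lt hθ1), sub_ne_zero.mpr (ne_of_gt hθ1)]
    ring
  have hrw2 : Real.exp (-s₀) = θ * θ ^ (θ / (1 - θ)) := by
    rw [Real.rpow_def_of_pos hθ0, show θ = Real.exp (Real.log θ) from (Real.exp_log hθ0).symm]
    rw [← Real.exp_add]
    · congr 1
      · rw [Real.exp_log hθ0, hs₀def]
        field_simp [sub_ne_zero.mpr (ne_of_lt hθ1), sub_ne_zero.mpr (ne_of_gt hθ1)]
        ring
  have hfs₀ : f s₀ < 0 := by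
    rw [hf, hrw1, hrw2]
    nlinarith
  -- the first zero a₁ of f
  obtain ⟨a₁, ha₁mem, ha₁⟩ : ∃ a₁ ∈ Icc (0:ℝ) s₀, f a₁ = 0 := by
    have h := intermediate_value_Icc' hs₀pos.le hfc.continuousOn
      (show (0:ℝ) ∈ Icc (f s₀) (f 0) from ⟨hfs₀.le, hf0.le⟩)
    obtain ⟨a₁, hm, hv⟩ := h
    exact ⟨a₁, hm, hv⟩
  have ha₁pos : 0 < a₁ := by
    rcases lt_or_eq_of_le ha₁mem.1 with h | h
    · exact h
    · exfalso; rw [← h] at ha₁; linarith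
  have ha₁lt : a₁ < s₀ := by
    rcases lt_or_eq_of_le ha₁mem.2 with h | h
    · exact h
    · exfalso; rw [h] at ha₁; linarith
  have hleast : IsLeast {s : ℝ | f s = 0} a₁ := by
    refine ⟨ha₁, ?_⟩
    intro s hs
    by_contra h
    push_neg at h
    have := fanti (show s ∈ Iic s₀ from (h.trans ha₁lt).le) (show a₁ ∈ Iic s₀ from ha₁lt.le) h
    rw [ha₁, hs] at this
    exact lt_irrefl 0 this
  -- the second zero b₁ of f
  have hT1 : ∃ T ≥ s₀, 0 < f T := by
    refine ⟨max s₀ (-Real.log (1 - μ) / θ + 1), le_max_left _ _, ?_⟩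
    set T := max s₀ (-Real.log (1 - μ) / θ + 1) with hT
    have hT2 : -Real.log (1 - μ) / θ + 1 ≤ T := le_max_right _ _
    have h3 : Real.exp (-θ * T) < 1 - μ := by
      rw [show (1 - μ) = Real.exp (Real.log (1 - μ)) from (Real.exp_log h1μ).symm,
        Real.exp_lt_exp]
      have : -Real.log (1 - μ) / θ < T := by linarith
      rw [div_lt_iff₀ hθ0] at this
      nlinarith
    rw [hf]
    have := Real.exp_pos (-T)
    linarith
  obtain ⟨T, hTs₀, hfT⟩ := hT1
  obtain ⟨b₁, hb₁mem, hb₁⟩ : ∃ b₁ ∈ Icc s₀ T, f b₁ = 0 := by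
    have h := intermediate_value_Icc hTs₀ hfc.continuousOn
      (show (0:ℝ) ∈ Icc (f s₀) (f T) from ⟨hfs₀.le, hfT.le⟩)
    obtain ⟨b₁, hm, hv⟩ := h
    exact ⟨b₁, hm, hv⟩
  have hb₁gt : s₀ < b₁ := by
    rcases lt_or_eq_of_le hb₁mem.1 with h | h
    · exact h
    · exfalso; rw [← h] at hb₁; linarith
  have ha₁b₁ : a₁ < b₁ := ha₁lt.trans hb₁gt
  -- monotonicity of g
  have gmono1 : StrictMonoOn g (Icc 0 a₁) := by
    apply strictMonoOn_of_deriv_pos (convex_Icc _ _) hgc.continuousOn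
    intro x hx
    rw [interior_Icc] at hx
    rw [(hg' x).deriv]
    have := fanti (show x ∈ Iic s₀ from (hx.2.trans ha₁lt).le)
      (show a₁ ∈ Iic s₀ from ha₁lt.le) hx.2
    rw [ha₁] at this
    exact this
  have ganti : StrictAntiOn g (Icc a₁ b₁) := by
    apply strictAntiOn_of_deriv_neg (convex_Icc _ _) hgc.continuousOn
    intro x hx
    rw [interior_Icc] at hx
    rw [(hg' x).deriv]
    rcases le_or_gt x s₀ with h | h
    · have := fanti (show a₁ ∈ Iic s₀ from ha₁lt.le) (show x ∈ Iic s₀ from h) hx.1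
      rw [ha₁] at this
      exact this
    · have := fmono (show x ∈ Ici s₀ from h.le) (show b₁ ∈ Ici s₀ from hb₁gt.le) hx.2
      rw [hb₁] at this
      exact this
  have gmono2 : StrictMonoOn g (Ici b₁) := by
    apply strictMonoOn_of_deriv_pos (convex_Ici _) hgc.continuousOn
    intro x hx
    rw [interior_Ici] at hx
    rw [(hg' x).deriv]
    have := fmono (show b₁ ∈ Ici s₀ from hb₁gt.le) (show x ∈ Ici s₀ from (hb₁gt.trans hx).le) hx
    rw [hb₁] at this
    exact this
  -- linear lower bound on g
  have glb : ∀ t : ℝ, 0 ≤ t → (1 - μ) * t - 1/θ ≤ g t := by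
    intro t ht
    rw [hg]
    have h1 : Real.exp (-t) ≤ 1 := Real.exp_le_one_iff.2 (by linarith)
    have h2 : 0 < (1/θ) * Real.exp (-θ * t) := by positivity
    linarith
  -- existence of a₂
  have hb₁pos : 0 < b₁ := hs₀pos.trans hb₁gt
  have hgb₁le : g b₁ ≤ g a₁ := (ganti.antitoneOn ⟨le_refl a₁, ha₁b₁.le⟩
    ⟨ha₁b₁.le, le_refl b₁⟩ ha₁b₁.le)
  set T₂ : ℝ := max b₁ ((g a₁ + 1/θ) / (1 - μ)) with hT₂def
  have hT₂b₁ : b₁ ≤ T₂ := le_max_left _ _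
  have hgT₂ : g a₁ ≤ g T₂ := by
    have h1 : (g a₁ + 1/θ) / (1 - μ) ≤ T₂ := le_max_right _ _
    have h2 : (1 - μ) * ((g a₁ + 1/θ) / (1 - μ)) = g a₁ + 1/θ := by
      field_simp
    have h3 := glb T₂ (hb₁pos.le.trans hT₂b₁)
    nlinarith
  obtain ⟨a₂, ha₂mem, ha₂⟩ : ∃ a₂ ∈ Icc b₁ T₂, g a₂ = g a₁ := by
    have h := intermediate_value_Icc hT₂b₁ hgc.continuousOn
      (show g a₁ ∈ Icc (g b₁) (g T₂) from ⟨hgb₁le, hgT₂⟩)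
    obtain ⟨a₂, hm, hv⟩ := h
    exact ⟨a₂, hm, hv⟩
  have ha₁a₂ : a₁ ≤ a₂ := ha₁b₁.le.trans ha₂mem.1
  have hgreatest : IsGreatest {t : ℝ | a₁ ≤ t ∧ g t = g a₁} a₂ := by
    refine ⟨⟨ha₁a₂, ha₂⟩, ?_⟩
    rintro t ⟨hta₁, hgt⟩
    by_contra h
    push_neg at h
    have := gmono2 (show a₂ ∈ Ici b₁ from ha₂mem.1)
      (show t ∈ Ici b₁ from (ha₂mem.1.trans h.le)) h
    rw [hgt, ha₂] at this
    exact lt_irrefl _ this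
  -- g ≤ g a₁ on [a₁, a₂]
  have gle : ∀ s, a₁ ≤ s → s ≤ a₂ → g s ≤ g a₁ := by
    intro s h1 h2
    rcases le_or_gt s b₁ with h | h
    · exact ganti.antitoneOn ⟨le_refl a₁, ha₁b₁.le⟩ ⟨h1, h⟩ h1
    · calc g s ≤ g a₂ := gmono2.monotoneOn (show s ∈ Ici b₁ from h.le)
            (show a₂ ∈ Ici b₁ from ha₂mem.1) h2
        _ = g a₁ := ha₂
  have gmon1' : ∀ s t, 0 ≤ s → s ≤ t → t ≤ a₁ → g s ≤ g t := by
    intro s t h1 h2 h3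
    exact gmono1.monotoneOn ⟨h1, h2.trans h3⟩ ⟨h1.trans h2, h3⟩ h2
  have gnn : ∀ t, 0 ≤ t → t ≤ a₁ → 0 ≤ g t := by
    intro t h1 h2
    have := gmon1' 0 t (le_refl 0) h1 h2
    rw [hg0] at this
    exact this
  have gnna₁ : 0 ≤ g a₁ := gnn a₁ ha₁pos.le (le_refl _)
  refine ⟨?_, a₁, a₂, ha₁pos, hleast, hgreatest, ?_, ?_, ?_⟩
  -- the integral identity
  · intro t _
    have hInt := intervalIntegral.integral_eq_sub_of_hasDerivAt
      (fun s _ => hg' s) (hfc.intervalIntegrable 0 t)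
    rw [hInt, hg0, sub_zero]
  -- η on [0, a₁]
  · intro t ht hta₁
    rw [hη t ht]
    apply IsGreatest.csSup_eq
    constructor
    · exact ⟨t, ⟨ht, le_refl t⟩, max_eq_left (gnn t ht hta₁)⟩
    · rintro x ⟨s, hs, rfl⟩
      exact max_le (gmon1' s t hs.1 hs.2 hta₁) (gnn t ht hta₁)
  -- η on [a₁, a₂]
  · intro t hta₁ hta₂
    have ht0 : 0 ≤ t := ha₁pos.le.trans hta₁
    rw [hη t ht0]
    apply IsGreatest.csSup_eq
    constructor
    · exact ⟨a₁, ⟨ha₁pos.le, hta₁⟩, max_eq_left gnna₁⟩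
    · rintro x ⟨s, hs, rfl⟩
      refine max_le ?_ gnna₁
      rcases le_or_gt s a₁ with h | h
      · calc g s ≤ g a₁ := gmon1' s a₁ hs.1 h (le_refl _)
          _ = g a₁ := rfl
      · exact gle s h.le (hs.2.trans hta₂)
  -- η on [a₂, ∞)
  · intro t hta₂
    have ht0 : 0 ≤ t := (ha₁pos.le.trans ha₁a₂).trans hta₂
    have hgt : g a₁ ≤ g t := by
      calc g a₁ = g a₂ := ha₂.symm
        _ ≤ g t := gmono2.monotoneOn (show a₂ ∈ Ici b₁ from ha₂mem.1)
            (show t ∈ Ici b₁ from ha₂mem.1.trans hta₂) hta₂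
    have hgtnn : 0 ≤ g t := gnna₁.trans hgt
    rw [hη t ht0]
    apply IsGreatest.csSup_eq
    constructor
    · exact ⟨t, ⟨ht0, le_refl t⟩, max_eq_left hgtnn⟩
    · rintro x ⟨s, hs, rfl⟩
      refine max_le ?_ hgtnn
      rcases le_or_gt s a₁ with h | h
      · exact (gmon1' s a₁ hs.1 h (le_refl _)).trans hgt
      · rcases le_or_gt s a₂ with h2 | h2
        · exact (gle s h.le h2).trans hgt
        · exact gmono2.monotoneOn (show s ∈ Ici b₁ from (ha₂mem.1.trans h2.le))
            (show t ∈ Ici b₁ from ha₂mem.1.trans hta₂) hs.2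
end

section
/- Let λ ≥ μ > 0, let G : [0,∞) → [0,1] be non-decreasing with G(0) = 0, continuous at 0, and not identically 1 on any neighborhood of 0 (i.e., y_max = inf{x : G(x) = 1} > 0), and let Ḡ₀(x) = 𝒬₀((x,∞)) be the tail of a finite Borel measure 𝒬₀ on [0,∞) with Q(0) := 𝒬₀((0,∞)) > 0. Define H(x,t) = Ḡ₀(x+t) + λ ∫₀ᵗ Ḡ(x+t−s) ds with Ḡ = 1 − G, let ψ(t) = Q(0) + (λ−μ)t, and let φ(t) = ψ(t) − sup_{s∈[0,t]} max(ψ(s) − H(0,s), 0) be the Skorohod-map image of ψ on the domain (−∞, H(0,·)]. Then for every T > 0, δ₁ := min( Q(0), inf_{t∈[0,T]} H(0,t) ) > 0 and φ(t) ≥ δ₁ > 0 for all t ∈ [0,T]. -/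
open MeasureTheory

/-- In the critical/super-critical case `λ ≥ μ > 0`, the fluid queue length
`φ(t) = ψ(t) − sup_{s∈[0,t]} (ψ(s) − H(0,s))⁺`, with `ψ(t) = Q(0) + (λ−μ)t`,
stays bounded below on every `[0,T]` by the positive constant
`δ₁ = min(Q(0), inf_{t∈[0,T]} H(0,t))`. Here `G(0) = 0`, `G` is continuous at
`0`, `y_max = inf{x : G(x) = 1} > 0` (witnessed by `∃ ε > 0, G(ε) < 1`), and
`Q(0) = 𝒬₀((0,∞)) > 0`. -/
theorem fluid_queue_positive
    (lam μ : ℝ) (hμ : 0 < μ) (hlm : μ ≤ lam)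
    (G : ℝ → ℝ)
    (hGmono : MonotoneOn G (Set.Ici 0))
    (hGrange : ∀ x, 0 ≤ x → G x ∈ Set.Icc (0 : ℝ) 1)
    (hG0 : G 0 = 0)
    (hGcont0 : ContinuousWithinAt G (Set.Ici 0) 0)
    (hymax : ∃ ε : ℝ, 0 < ε ∧ G ε < 1)
    (Q0meas : Measure ℝ) [IsFiniteMeasure Q0meas]
    (hsupp : Q0meas (Set.Iio 0) = 0)
    (G0bar : ℝ → ℝ)
    (hG0bar : ∀ x, G0bar x = (Q0meas (Set.Ioi x)).toReal)
    (hQ0pos : 0 < (Q0meas (Set.Ioi 0)).toReal)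
    (H : ℝ → ℝ → ℝ)
    (hH : ∀ x t, 0 ≤ x → 0 ≤ t →
      H x t = G0bar (x + t) + lam * ∫ s in (0:ℝ)..t, (1 - G (x + t - s)))
    (ψ φ : ℝ → ℝ)
    (hψ : ∀ t, ψ t = (Q0meas (Set.Ioi 0)).toReal + (lam - μ) * t)
    (hφ : ∀ t, 0 ≤ t →
      φ t = ψ t - sSup ((fun s => max (ψ s - H 0 s) 0) '' Set.Icc 0 t)) :
    ∀ T, 0 < T →
      0 < min ((Q0meas (Set.Ioi 0)).toReal) (sInf ((fun t => H 0 t) '' Set.Icc 0 T)) ∧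
      ∀ t ∈ Set.Icc (0:ℝ) T,
        min ((Q0meas (Set.Ioi 0)).toReal) (sInf ((fun t => H 0 t) '' Set.Icc 0 T)) ≤ φ t := by
  classical
  obtain ⟨ε, hεpos, hGε⟩ := hymax
  have hlam : 0 < lam := lt_of_lt_of_le hμ hlm
  set Q := (Q0meas (Set.Ioi (0:ℝ))).toReal with hQdef
  -- Step A: tail measure stays ≥ Q/2 near 0
  have hA : ∃ t₀ : ℝ, 0 < t₀ ∧ ∀ t, 0 ≤ t → t ≤ t₀ → Q / 2 ≤ (Q0meas (Set.Ioi t)).toReal := by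
    have hmono : Monotone (fun n : ℕ => Set.Ioi ((1:ℝ)/(n+1))) := by
      intro m n hmn
      apply Set.Ioi_subset_Ioi
      apply one_div_le_one_div_of_le (by positivity)
      exact_mod_cast Nat.add_le_add_right hmn 1
    have hUnion : Set.Ioi (0:ℝ) = ⋃ n : ℕ, Set.Ioi ((1:ℝ)/(n+1)) := by
      ext x
      simp only [Set.mem_iUnion, Set.mem_Ioi]
      constructor
      · intro hx
        obtain ⟨n, hn⟩ := exists_nat_one_div_lt hx
        exact ⟨n, hn⟩
      · rintro ⟨n, hn⟩
        have h1 : (0:ℝ) < 1/(n+1) := by positivity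
        linarith
    have hsup : Q0meas (Set.Ioi (0:ℝ)) = ⨆ n : ℕ, Q0meas (Set.Ioi ((1:ℝ)/(n+1))) := by
      rw [hUnion]
      exact hmono.directed_le.measure_iUnion
    have hfin : Q0meas (Set.Ioi (0:ℝ)) ≠ ⊤ := measure_ne_top _ _
    have hlt : ENNReal.ofReal (Q/2) < Q0meas (Set.Ioi (0:ℝ)) := by
      rw [← ENNReal.ofReal_toReal hfin]
      exact ENNReal.ofReal_lt_ofReal_iff hQ0pos |>.mpr (by linarith)
    rw [hsup] at hlt
    obtain ⟨n, hn⟩ := lt_iSup_iff.mp hlt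
    refine ⟨1/(n+1), by positivity, ?_⟩
    intro t ht htle
    have h1 : Q0meas (Set.Ioi ((1:ℝ)/(n+1))) ≤ Q0meas (Set.Ioi t) :=
      measure_mono (Set.Ioi_subset_Ioi htle)
    have h2 : Q/2 ≤ (Q0meas (Set.Ioi ((1:ℝ)/(n+1)))).toReal :=
      ((ENNReal.ofReal_le_iff_le_toReal (measure_ne_top _ _)).mp hn.le)
    exact le_trans h2 (ENNReal.toReal_le_toReal (measure_ne_top _ _) (measure_ne_top _ _) |>.mpr h1)
  obtain ⟨t₀, ht₀, hQhalf⟩ := hA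
  set δ := min t₀ ε with hδdef
  have hδpos : 0 < δ := lt_min ht₀ hεpos
  set c := min (Q/2) (lam * δ * (1 - G ε)) with hcdef
  have hcpos : 0 < c := lt_min (by linarith) (mul_pos (mul_pos hlam hδpos) (by linarith))
  -- integrability of 1 - G on [a,b] ⊆ [0,∞)
  have hint_ab : ∀ a b : ℝ, 0 ≤ a → a ≤ b →
      IntervalIntegrable (fun u => 1 - G u) volume a b := by
    intro a b ha hab
    have h1 : MonotoneOn G (Set.uIcc a b) := by
      apply hGmono.mono
      rw [Set.uIcc_of_le hab]
      intro x hx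
      exact le_trans ha hx.1
    exact intervalIntegrable_const.sub h1.intervalIntegrable
  -- Step B: uniform lower bound on H 0 t
  have hHlb : ∀ t, 0 ≤ t → c ≤ H 0 t := by
    intro t ht
    have hHt : H 0 t = G0bar t + lam * ∫ s in (0:ℝ)..t, (1 - G (t - s)) := by
      have := hH 0 t le_rfl ht
      simpa using this
    have hintEq : (∫ s in (0:ℝ)..t, (1 - G (t - s))) = ∫ u in (0:ℝ)..t, (1 - G u) := by
      have := intervalIntegral.integral_comp_sub_left (a := 0) (b := t) (fun u => 1 - G u) t
      simpa using this
    have hInonneg : 0 ≤ ∫ u in (0:ℝ)..t, (1 - G u) := by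
      apply intervalIntegral.integral_nonneg ht
      intro u hu
      have := (hGrange u hu.1).2
      linarith
    have hG0bar_nonneg : 0 ≤ G0bar t := by
      rw [hG0bar]; exact ENNReal.toReal_nonneg
    rcases le_or_gt t t₀ with hcase | hcase
    · have h1 : Q/2 ≤ G0bar t := by rw [hG0bar]; exact hQhalf t ht hcase
      have h2 : 0 ≤ lam * ∫ u in (0:ℝ)..t, (1 - G u) := mul_nonneg hlam.le hInonneg
      calc c ≤ Q/2 := min_le_left _ _
        _ ≤ H 0 t := by rw [hHt, hintEq]; linarith
    · have hδt : δ ≤ t := le_trans (min_le_left _ _) hcase.le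
      have hsplit : (∫ u in (0:ℝ)..t, (1 - G u)) =
          (∫ u in (0:ℝ)..δ, (1 - G u)) + ∫ u in δ..t, (1 - G u) :=
        (intervalIntegral.integral_add_adjacent_intervals
          (hint_ab 0 δ le_rfl hδpos.le) (hint_ab δ t hδpos.le hδt)).symm
      have htail : 0 ≤ ∫ u in δ..t, (1 - G u) := by
        apply intervalIntegral.integral_nonneg hδt
        intro u hu
        have := (hGrange u (le_trans hδpos.le hu.1)).2
        linarith
      have hhead : δ * (1 - G ε) ≤ ∫ u in (0:ℝ)..δ, (1 - G u) := by
        have hmono' : ∀ u ∈ Set.Icc (0:ℝ) δ, (1 - G ε) ≤ 1 - G u := by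
          intro u hu
          have : G u ≤ G ε := hGmono hu.1 hεpos.le (le_trans hu.2 (min_le_right _ _))
          linarith
        have hconst : (∫ _ in (0:ℝ)..δ, (1 - G ε)) = δ * (1 - G ε) := by
          rw [intervalIntegral.integral_const, smul_eq_mul, sub_zero]
        calc δ * (1 - G ε) = ∫ _ in (0:ℝ)..δ, (1 - G ε) := hconst.symm
          _ ≤ ∫ u in (0:ℝ)..δ, (1 - G u) :=
            intervalIntegral.integral_mono_on hδpos.le intervalIntegrable_const
              (hint_ab 0 δ le_rfl hδpos.le) hmono'
      calc c ≤ lam * δ * (1 - G ε) := min_le_right _ _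
        _ ≤ H 0 t := by
            rw [hHt, hintEq, hsplit]
            nlinarith [mul_le_mul_of_nonneg_left hhead hlam.le,
              mul_nonneg hlam.le htail]
  -- Step C: conclude
  intro T hT
  have hne : ((fun t => H 0 t) '' Set.Icc 0 T).Nonempty :=
    ⟨H 0 0, ⟨0, ⟨le_rfl, hT.le⟩, rfl⟩⟩
  have hbdd : ∀ y ∈ (fun t => H 0 t) '' Set.Icc (0:ℝ) T, c ≤ y := by
    rintro y ⟨t, ht, rfl⟩
    exact hHlb t ht.1
  have hInfc : c ≤ sInf ((fun t => H 0 t) '' Set.Icc (0:ℝ) T) := le_csInf hne hbdd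
  set D := sInf ((fun t => H 0 t) '' Set.Icc (0:ℝ) T) with hD
  refine ⟨lt_min hQ0pos (lt_of_lt_of_le hcpos hInfc), ?_⟩
  intro t ht
  have hψQ : Q ≤ ψ t := by
    rw [hψ t]
    nlinarith [ht.1, sub_nonneg.mpr hlm]
  have hSup : sSup ((fun s => max (ψ s - H 0 s) 0) '' Set.Icc 0 t) ≤ max (ψ t - D) 0 := by
    apply Real.sSup_le
    · rintro y ⟨s, hs, rfl⟩
      have h1 : ψ s ≤ ψ t := by
        rw [hψ s, hψ t]
        nlinarith [sub_nonneg.mpr hlm, hs.2]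
      have h2 : D ≤ H 0 s :=
        csInf_le ⟨c, hbdd⟩ ⟨s, ⟨hs.1, le_trans hs.2 ht.2⟩, rfl⟩
      exact max_le_max (by linarith) le_rfl
    · exact le_max_right _ _
  rw [hφ t ht.1]
  rcases le_total D (ψ t) with h | h
  · have hmax : max (ψ t - D) 0 = ψ t - D := max_eq_left (by linarith)
    rw [hmax] at hSup
    have : min Q D ≤ D := min_le_right _ _
    linarith
  · have hmax : max (ψ t - D) 0 = 0 := max_eq_right (by linarith)
    rw [hmax] at hSup
    have : min Q D ≤ Q := min_le_left _ _
    linarith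
end
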